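/- Let H be a square-free simple graph, k ≥ 1, and P = v₀…v_k a path in H. With J_P the caterpillar gadget of P, for any o ∈ Γ_H(v₀) \ {v₁} and x ∈ Γ_H(v_k) \ {v_{k−1}}, there is no homomorphism σ : J_P → H with σ(y) = o, σ(z) = x, and σ(w_j) = v_j for all j ∈ [k−1]. -/

import Mathlib

/-- In a square-free graph `H`, for a path `v 0, …, v k`, there is no
homomorphism of the caterpillar gadget sending `y` to a neighbour `o ≠ v 1` of
`v 0` and `z` to a neighbour `x ≠ v (k-1)` of `v k` (the images of the path
`y u₁ … u_{k-1} z` are encoded by `u`, with `u j` adjacent to the pinned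
vertex `v j`). -/
theorem stmt_13 {V : Type*} (H : SimpleGraph V)
    (hsf : ¬ ∃ a b c d : V, a ≠ b ∧ a ≠ c ∧ a ≠ d ∧ b ≠ c ∧ b ≠ d ∧ c ≠ d ∧
      H.Adj a b ∧ H.Adj b c ∧ H.Adj c d ∧ H.Adj d a)
    {k : ℕ} (hk : 1 ≤ k) (v : ℕ → V)
    (hvinj : ∀ i j, i ≤ k → j ≤ k → v i = v j → i = j)
    (hvadj : ∀ j, j < k → H.Adj (v j) (v (j + 1)))
    (o : V) (ho : H.Adj (v 0) o) (hov : o ≠ v 1)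
    (x : V) (hx : H.Adj (v k) x) (hxv : x ≠ v (k - 1)) :
    ¬ ∃ u : ℕ → V, u 0 = o ∧ u k = x ∧
      (∀ j, j < k → H.Adj (u j) (u (j + 1))) ∧
      (∀ j, 1 ≤ j → j ≤ k - 1 → H.Adj (u j) (v j)) := by
  rintro ⟨u, hu0, huk, hupath, hupin⟩
  rcases eq_or_lt_of_le hk with hk1 | hk2
  · -- k = 1
    subst hk1
    have hox : H.Adj o x := by
      have := hupath 0 (by omega); rw [hu0, huk] at this; exact this
    have hxv0 : x ≠ v 0 := by simpa using hxv
    exact hsf ⟨v 0, v 1, x, o,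
      fun h => by simpa using hvinj 0 1 (by omega) (by omega) h,
      fun h => hxv0 h.symm, fun h => ho.ne h, hx.ne,
      fun h => hov h.symm, hox.ne',
      hvadj 0 (by omega), hx, hox.symm, ho.symm⟩
  · -- k ≥ 2
    obtain ⟨m, rfl⟩ : ∃ m, k = m + 2 := ⟨k - 2, by omega⟩
    set k := m + 2 with hkdef
    have key : ∀ j, j + 2 ≤ k → u (j + 1) = v j := by
      intro j
      induction j with
      | zero =>
        intro hj
        by_contra h
        have ha : H.Adj o (u 1) := hu0 ▸ hupath 0 (by omega)
        have hb : H.Adj (u 1) (v 1) := hupin 1 le_rfl (by omega)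
        exact hsf ⟨o, u 1, v 1, v 0,
          ha.ne, hov, fun hh => ho.ne hh.symm, hb.ne, h, fun hh =>
            by simpa using hvinj 1 0 (by omega) (by omega) hh,
          ha, hb, (hvadj 0 (by omega)).symm, ho⟩
      | succ j ih =>
        intro hj
        have huj : u (j + 1) = v j := ih (by omega)
        by_contra h
        have ha : H.Adj (v j) (u (j + 2)) := huj ▸ hupath (j + 1) (by omega)
        have hb : H.Adj (u (j + 2)) (v (j + 2)) := hupin (j + 2) (by omega) (by omega)
        have hvne : ∀ i i', i ≤ k → i' ≤ k → i ≠ i' → v i ≠ v i' :=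
          fun i i' hi hi' hne hh => hne (hvinj i i' hi hi' hh)
        exact hsf ⟨v j, u (j + 2), v (j + 2), v (j + 1),
          ha.ne, hvne j (j + 2) (by omega) (by omega) (by omega),
          hvne j (j + 1) (by omega) (by omega) (by omega),
          hb.ne, h, hvne (j + 2) (j + 1) (by omega) (by omega) (by omega),
          ha, hb, (hvadj (j + 1) (by omega)).symm, (hvadj j (by omega)).symm⟩
    have hum : u (m + 1) = v m := key m le_rfl
    have hxv' : x ≠ v (m + 1) := by
      have h1 : k - 1 = m + 1 := by omega
      rw [h1] at hxv; exact hxv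
    have ha : H.Adj (v m) x := by
      have := hupath (m + 1) (by omega)
      rw [hum] at this
      rw [← huk]; exact this
    have hvne : ∀ i i', i ≤ k → i' ≤ k → i ≠ i' → v i ≠ v i' :=
      fun i i' hi hi' hne hh => hne (hvinj i i' hi hi' hh)
    exact hsf ⟨v m, x, v k, v (m + 1),
      ha.ne, hvne m k (by omega) (by omega) (by omega),
      hvne m (m + 1) (by omega) (by omega) (by omega),
      hx.ne', hxv', hvne k (m + 1) (by omega) (by omega) (by omega),
      ha, hx.symm, (hvadj (m + 1) (by omega)).symm, (hvadj m (by omega)).symm⟩
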